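/- For every CSL-preferential model J = (Δ, (≺_w)_{w∈Δ}, ·^J) there exists a CSL-distance minspace model I on the same set Δ that is equivalent to J, i.e. A^I = A^J for every L_CSL-formula A. -/

import Mathlib

/-- Formulas of the language L_CSL: propositional variables, ⊥, negation,
conjunction, and the comparative similarity connective `cls` (A ⇇ B). -/
inductive CSLForm : Type
  | var : ℕ → CSLForm
  | bot : CSLForm
  | neg : CSLForm → CSLForm
  | and : CSLForm → CSLForm → CSLForm
  | cls : CSLForm → CSLForm → CSLForm

namespace CSLForm

def top : CSLForm := neg bot
def or (A B : CSLForm) : CSLForm := neg (and (neg A) (neg B))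
def imp (A B : CSLForm) : CSLForm := or (neg A) B

end CSLForm

/-- A boolean valuation respecting the classical connectives
(⇇-formulas and variables are treated as atoms). -/
def IsBoolVal (v : CSLForm → Bool) : Prop :=
  v .bot = false ∧ (∀ A, v (.neg A) = !v A) ∧ (∀ A B, v (.and A B) = (v A && v B))

/-- Classical tautologies of L_CSL. -/
def CSLTautology (A : CSLForm) : Prop := ∀ v, IsBoolVal v → v A = true

/-- The Hilbert system CSMS. -/
inductive CSMS : CSLForm → Prop
  | taut {A : CSLForm} : CSLTautology A → CSMS A
  | mp {A B : CSLForm} : CSMS (A.imp B) → CSMS A → CSMS B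
  | mon {A B : CSLForm} (C : CSLForm) : CSMS (A.imp B) → CSMS ((A.cls C).imp (B.cls C))
  | ax1 (A B : CSLForm) : CSMS ((A.cls B).neg.or (B.cls A).neg)
  | ax2 (A B C : CSLForm) : CSMS ((A.cls B).imp ((A.cls C).or (C.cls B)))
  | ax3 (A B : CSLForm) : CSMS ((A.and B.neg).imp (A.cls B))
  | ax4 (A B : CSLForm) : CSMS ((A.cls B).imp B.neg)
  | ax5 (A B C : CSLForm) : CSMS (((A.cls B).and (A.cls C)).imp (A.cls (B.or C)))
  | ax6 (A : CSLForm) : CSMS ((A.cls .bot).imp (((A.cls .bot).neg.cls .bot).neg))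

/-- Semantic extension of a formula, given preferential relations
`pref w x y` (meaning x ≺_w y) and a valuation of propositional variables. -/
def prefEval {W : Type} (pref : W → W → W → Prop) (val : ℕ → Set W) :
    CSLForm → Set W
  | .var i => val i
  | .bot => ∅
  | .neg A => (prefEval pref val A)ᶜ
  | .and A B => prefEval pref val A ∩ prefEval pref val B
  | .cls A B =>
      {w | ∃ x ∈ prefEval pref val A, ∀ y ∈ prefEval pref val B, pref w x y}

/-- A CSL-preferential model. -/
structure CSLPrefModel (W : Type) where
  ne : Nonempty W
  pref : W → W → W → Prop
  modular : ∀ w x y z, pref w x y → pref w z y ∨ pref w x z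
  centered : ∀ w x, x = w ∨ pref w w x
  limit : ∀ w (X : Set W), X.Nonempty → {y ∈ X | ∀ z, pref w z y → z ∉ X}.Nonempty
  val : ℕ → Set W

def CSLPrefModel.eval {W : Type} (M : CSLPrefModel W) : CSLForm → Set W :=
  prefEval M.pref M.val

/-- Distance from a point to a set, in ℝ≥0∞ (so that it is ∞ on the empty set). -/
noncomputable def setDist {W : Type} (d : W → W → ℝ) (w : W) (X : Set W) : ENNReal :=
  ⨅ x ∈ X, ENNReal.ofReal (d w x)

/-- A CSL-distance minspace model. -/
structure CSLMinModel (W : Type) where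
  ne : Nonempty W
  dist : W → W → ℝ
  dist_nonneg : ∀ x y, 0 ≤ dist x y
  dist_eq_zero : ∀ x y, dist x y = 0 ↔ x = y
  min_attained : ∀ (w : W) (X : Set W), X.Nonempty → ∃ x ∈ X, ∀ y ∈ X, dist w x ≤ dist w y
  val : ℕ → Set W

noncomputable def CSLMinModel.eval {W : Type} (M : CSLMinModel W) : CSLForm → Set W
  | .var i => M.val i
  | .bot => ∅
  | .neg A => (M.eval A)ᶜ
  | .and A B => M.eval A ∩ M.eval B
  | .cls A B => {w | setDist M.dist w (M.eval A) < setDist M.dist w (M.eval B)}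

/-- Iterated disjunction of a list of formulas. -/
def bigOr : List CSLForm → CSLForm
  | [] => .bot
  | [A] => A
  | A :: B :: rest => A.or (bigOr (B :: rest))

/-- Iterated conjunction of a list of formulas. -/
def bigAnd : List CSLForm → CSLForm
  | [] => .top
  | [A] => A
  | A :: B :: rest => A.and (bigAnd (B :: rest))

/-- Γ is inconsistent wrt CSMS: there are A₁,…,Aₙ ∈ Γ (n ≥ 1) with ⊢ ¬A₁ ⊔ … ⊔ ¬Aₙ. -/
def Inconsistent (Γ : Set CSLForm) : Prop :=
  ∃ L : List CSLForm, L ≠ [] ∧ (∀ A ∈ L, A ∈ Γ) ∧ CSMS (bigOr (L.map .neg))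

def Consistent (Γ : Set CSLForm) : Prop := ¬ Inconsistent Γ

def MaxConsistent (Γ : Set CSLForm) : Prop :=
  Consistent Γ ∧ ∀ A, A ∉ Γ → Inconsistent (insert A Γ)

/-- w^A = {¬B | (A ⇇ B) ∈ w}. -/
def projSet (w : Set CSLForm) (A : CSLForm) : Set CSLForm :=
  {F | ∃ B, F = CSLForm.neg B ∧ (A.cls B) ∈ w}

/-- R(x,y) iff every A ∈ y satisfies (A ⇇ ⊥) ∈ x. -/
def Rrel (x y : Set CSLForm) : Prop := ∀ A, A ∈ y → (A.cls .bot) ∈ x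

/-- The canonical preferential relation: x ≺_w y iff
∃ B ∈ y such that ∀ A ∈ x, (A ⇇ B) ∈ w. -/
def canonPrec (w x y : Set CSLForm) : Prop :=
  ∃ B, B ∈ y ∧ ∀ A, A ∈ x → (A.cls B) ∈ w


namespace PrefToMin

open scoped Classical

def enc : CSLForm → ℕ
  | .var i => Nat.pair 0 i
  | .bot => Nat.pair 1 0
  | .neg A => Nat.pair 2 (enc A)
  | .and A B => Nat.pair 3 (Nat.pair (enc A) (enc B))
  | .cls A B => Nat.pair 4 (Nat.pair (enc A) (enc B))

theorem enc_inj : Function.Injective enc := by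
  intro A
  induction A with
  | var i => intro B h; cases B <;> simp [enc, Nat.pair_eq_pair] at h; rw [h]
  | bot => intro B h; cases B <;> simp [enc, Nat.pair_eq_pair] at h; rfl
  | neg A ih =>
      intro B h; cases B <;> simp [enc, Nat.pair_eq_pair] at h
      rw [ih h]
  | and A B ihA ihB =>
      intro C h; cases C <;> simp [enc, Nat.pair_eq_pair] at h
      rw [ihA h.1, ihB h.2]
  | cls A B ihA ihB =>
      intro C h; cases C <;> simp [enc, Nat.pair_eq_pair] at h
      rw [ihA h.1, ihB h.2]

variable {W : Type} (J : CSLPrefModel W)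

theorem pref_irrefl (w x : W) : ¬ J.pref w x x := by
  intro h
  obtain ⟨y, hyX, hmin⟩ := J.limit w {x} ⟨x, rfl⟩
  rcases hyX with rfl
  exact hmin _ h rfl

theorem pref_asymm {w x y : W} (h : J.pref w x y) : ¬ J.pref w y x := by
  intro h'
  obtain ⟨z, hzX, hmin⟩ := J.limit w {x, y} ⟨x, Or.inl rfl⟩
  rcases hzX with rfl | rfl
  · exact hmin _ h' (Or.inr rfl)
  · exact hmin _ h (Or.inl rfl)

/-- A chosen `≺_w`-minimal point of `J.eval A` (or `w` if the extension is empty). -/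
noncomputable def mpt (w : W) (A : CSLForm) : W :=
  if h : (J.eval A).Nonempty then (J.limit w (J.eval A) h).choose else w

theorem mpt_mem {w : W} {A : CSLForm} (h : (J.eval A).Nonempty) :
    mpt J w A ∈ J.eval A := by
  rw [mpt, dif_pos h]
  exact (J.limit w (J.eval A) h).choose_spec.1

theorem mpt_min {w : W} {A : CSLForm} (h : (J.eval A).Nonempty) :
    ∀ z, J.pref w z (mpt J w A) → z ∉ J.eval A := by
  rw [mpt, dif_pos h]
  exact (J.limit w (J.eval A) h).choose_spec.2

/-- The term of the rank series: formula `A` contributes `2^{-enc A}` to the rank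
of `x` (seen from `w`) unless the chosen minimal point of `A` is strictly below `x`. -/
noncomputable def trm (w x : W) (A : CSLForm) : ℝ :=
  if J.pref w x (mpt J w A) then 0 else (1/2 : ℝ) ^ (enc A)

theorem trm_nonneg (w x : W) (A : CSLForm) : 0 ≤ trm J w x A := by
  rw [trm]; split <;> positivity

theorem trm_le (w x : W) (A : CSLForm) : trm J w x A ≤ (1/2 : ℝ) ^ (enc A) := by
  rw [trm]; split
  · positivity
  · exact le_refl _

theorem summable_trm (w x : W) : Summable (trm J w x) := by
  refine Summable.of_nonneg_of_le (trm_nonneg J w x) (trm_le J w x) ?_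
  exact ((summable_geometric_of_lt_one (by norm_num) (by norm_num)).comp_injective enc_inj)

/-- The rank of `x` as seen from `w`. -/
noncomputable def efun (w x : W) : ℝ := ∑' A : CSLForm, trm J w x A

theorem efun_nonneg (w x : W) : 0 ≤ efun J w x :=
  tsum_nonneg (trm_nonneg J w x)

theorem trm_mono {w x y : W} (h : ¬ J.pref w y x) (A : CSLForm) :
    trm J w x A ≤ trm J w y A := by
  by_cases hx : J.pref w x (mpt J w A)
  · rw [trm, if_pos hx]
    exact trm_nonneg J w y A
  · rw [trm, if_neg hx]
    have hy : ¬ J.pref w y (mpt J w A) := by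
      intro hy
      rcases J.modular w y (mpt J w A) x hy with h1 | h1
      · exact hx h1
      · exact h h1
    rw [trm, if_neg hy]

theorem efun_mono {w x y : W} (h : ¬ J.pref w y x) : efun J w x ≤ efun J w y :=
  Summable.tsum_le_tsum (trm_mono J h) (summable_trm J w x) (summable_trm J w y)

theorem efun_strict {w x : W} {B : CSLForm} (h : J.pref w x (mpt J w B)) :
    efun J w x < efun J w (mpt J w B) := by
  have hle : ∀ A, trm J w x A ≤ trm J w (mpt J w B) A := by
    intro A
    by_cases hx : J.pref w x (mpt J w A)
    · rw [trm, if_pos hx]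
      exact trm_nonneg J w (mpt J w B) A
    · rw [trm, if_neg hx]
      have hb : ¬ J.pref w (mpt J w B) (mpt J w A) := by
        intro hb
        rcases J.modular w (mpt J w B) (mpt J w A) x hb with h1 | h1
        · exact hx h1
        · exact pref_asymm J h h1
      rw [trm, if_neg hb]
  have hstrict : trm J w x B < trm J w (mpt J w B) B := by
    rw [trm, trm, if_pos h, if_neg (pref_irrefl J w (mpt J w B))]
    positivity
  exact Summable.tsum_lt_tsum hle hstrict (summable_trm J w x) (summable_trm J w (mpt J w B))

/-- The distance function of the minspace model. -/
noncomputable def dfun (w x : W) : ℝ := if x = w then 0 else 1 + efun J w x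

theorem dfun_nonneg (w x : W) : 0 ≤ dfun J w x := by
  rw [dfun]; split
  · exact le_refl _
  · have := efun_nonneg J w x; linarith

theorem dfun_eq_zero (w x : W) : dfun J w x = 0 ↔ x = w := by
  rw [dfun]
  by_cases hx : x = w
  · simp [hx]
  · rw [if_neg hx]
    have := efun_nonneg J w x
    constructor
    · intro h; linarith
    · intro h; exact absurd h hx

theorem dfun_mono {w x y : W} (h : ¬ J.pref w y x) : dfun J w x ≤ dfun J w y := by
  by_cases hx : x = w
  · rw [hx, dfun, if_pos rfl]; exact dfun_nonneg J w y
  · by_cases hy : y = w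
    · subst hy
      rcases J.centered y x with rfl | hc
      · exact absurd rfl hx
      · exact absurd hc h
    · rw [dfun, if_neg hx, dfun, if_neg hy]
      have := efun_mono J h
      linarith

theorem mpt_ne_base {w : W} {B : CSLForm} {x : W} (h : J.pref w x (mpt J w B)) :
    mpt J w B ≠ w := by
  intro heq
  rw [heq] at h
  rcases J.centered w x with rfl | hc
  · exact pref_irrefl J _ _ h
  · exact pref_asymm J h hc

theorem dfun_strict {w x : W} {B : CSLForm} (h : J.pref w x (mpt J w B)) :
    dfun J w x < dfun J w (mpt J w B) := by
  have hne := mpt_ne_base J h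
  rw [dfun, dfun, if_neg hne]
  by_cases hx : x = w
  · rw [if_pos hx]
    have := efun_nonneg J w (mpt J w B); linarith
  · rw [if_neg hx]
    have := efun_strict J h; linarith

theorem setDist_empty (w : W) : setDist (dfun J) w (∅ : Set W) = ⊤ := by
  simp [setDist]

theorem setDist_eq {w : W} {X : Set W} {x₀ : W} (hx₀ : x₀ ∈ X)
    (hmin : ∀ y ∈ X, dfun J w x₀ ≤ dfun J w y) :
    setDist (dfun J) w X = ENNReal.ofReal (dfun J w x₀) := by
  apply le_antisymm
  · exact iInf₂_le x₀ hx₀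
  · exact le_iInf₂ fun y hy => ENNReal.ofReal_le_ofReal (hmin y hy)

theorem setDist_eval {w : W} {A : CSLForm} (h : (J.eval A).Nonempty) :
    setDist (dfun J) w (J.eval A) = ENNReal.ofReal (dfun J w (mpt J w A)) := by
  apply setDist_eq J (mpt_mem J h)
  intro y hy
  apply dfun_mono J
  intro hp
  exact mpt_min J h y hp hy

/-- Key semantic lemma for the ⇇ connective. -/
theorem key (w : W) (A B : CSLForm) :
    setDist (dfun J) w (J.eval A) < setDist (dfun J) w (J.eval B) ↔
      ∃ x ∈ J.eval A, ∀ y ∈ J.eval B, J.pref w x y := by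
  by_cases hA : (J.eval A).Nonempty
  · by_cases hB : (J.eval B).Nonempty
    · rw [setDist_eval J hA, setDist_eval J hB,
        ENNReal.ofReal_lt_ofReal_iff_of_nonneg (dfun_nonneg J w (mpt J w A))]
      constructor
      · intro hlt
        refine ⟨mpt J w A, mpt_mem J hA, fun y hy => ?_⟩
        have hp : J.pref w (mpt J w A) (mpt J w B) := by
          by_contra hnp
          exact absurd (dfun_mono J hnp) (not_le_of_gt hlt)
        rcases J.modular w (mpt J w A) (mpt J w B) y hp with h1 | h1
        · exact absurd hy (mpt_min J hB y h1)
        · exact h1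
      · rintro ⟨x, hx, hxy⟩
        have hp : J.pref w (mpt J w A) (mpt J w B) := by
          rcases J.modular w x (mpt J w B) (mpt J w A) (hxy _ (mpt_mem J hB)) with h1 | h1
          · exact h1
          · exact absurd hx (mpt_min J hA x h1)
        exact dfun_strict J hp
    · rw [Set.not_nonempty_iff_eq_empty] at hB
      rw [hB, setDist_empty J, setDist_eval J hA]
      constructor
      · intro _
        exact ⟨mpt J w A, mpt_mem J hA, fun y hy => absurd hy (by simp)⟩
      · intro _
        exact ENNReal.ofReal_lt_top
  · rw [Set.not_nonempty_iff_eq_empty] at hA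
    rw [hA, setDist_empty J]
    simp

end PrefToMin

/-- every CSL-preferential model has an equivalent
CSL-distance minspace model on the same set. -/
theorem preferential_to_minspace {W : Type} (J : CSLPrefModel W) :
    ∃ I : CSLMinModel W, ∀ A : CSLForm, I.eval A = J.eval A := by
  classical
  refine ⟨⟨J.ne, PrefToMin.dfun J, PrefToMin.dfun_nonneg J, ?_, ?_, J.val⟩, ?_⟩
  · intro x y
    rw [PrefToMin.dfun_eq_zero J x y, eq_comm]
  · intro w X hX
    obtain ⟨z, hzX, hmin⟩ := J.limit w X hX
    refine ⟨z, hzX, fun y hy => ?_⟩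
    apply PrefToMin.dfun_mono J
    intro hp
    exact hmin y hp hy
  · intro A
    induction A with
    | var i => rfl
    | bot => rfl
    | neg A ih =>
        show (CSLMinModel.eval _ A)ᶜ = _
        rw [ih]; rfl
    | and A B ihA ihB =>
        show CSLMinModel.eval _ A ∩ CSLMinModel.eval _ B = _
        rw [ihA, ihB]; rfl
    | cls A B ihA ihB =>
        show {w | setDist _ w (CSLMinModel.eval _ A) < setDist _ w (CSLMinModel.eval _ B)} = _
        rw [ihA, ihB]
        ext w
        exact PrefToMin.key J w A B
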